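/- Define out : ℤ → ℝ by out(x) = 0 for x ≤ 0, out(1) = 1, out(2) = 2, and for α ≥ 3, out(α) = 1 + (1/α)·∑_{i=1}^{α} max(out(i−1) + out(α−i−1), out(α−i) + out(i−2)). Then out is non-decreasing and out(α) ≤ α for all α ≥ 0. -/

import Mathlib

theorem stmt_11 (out : ℤ → ℝ)
    (h0 : ∀ x ≤ 0, out x = 0) (h1 : out 1 = 1) (h2 : out 2 = 2)
    (hrec : ∀ α : ℤ, 3 ≤ α → out α = 1 + (1 / (α : ℝ)) *
      ∑ i ∈ Finset.Icc (1 : ℤ) α,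
        max (out (i - 1) + out (α - i - 1)) (out (α - i) + out (i - 2))) :
    Monotone out ∧ ∀ α : ℤ, 0 ≤ α → out α ≤ (α : ℝ) := by
  -- value of out 3
  have h3 : out 3 = 8/3 := by
    rw [hrec 3 (by norm_num), show Finset.Icc (1:ℤ) 3 = {1,2,3} from by decide]
    rw [Finset.sum_insert (by decide), Finset.sum_insert (by decide),
      Finset.sum_singleton]
    norm_num [h0 (-1) (by norm_num), h0 0 le_rfl, h1, h2]
  -- single-step monotonicity, strong induction on ℕ
  have hstep : ∀ n : ℕ, out (n:ℤ) ≤ out ((n:ℤ)+1) := by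
    intro n
    induction n using Nat.strong_induction_on with
    | _ n IH =>
      rcases Nat.lt_or_ge n 3 with hn | hn
      · interval_cases n
        · norm_num [h0 0 le_rfl, h1]
        · norm_num [h1, h2]
        · norm_num [h2, h3]
      · -- n ≥ 3
        set α : ℤ := (n:ℤ) with hαdef
        have hα : (3:ℤ) ≤ α := by omega
        have stepZ : ∀ j : ℤ, j < α → out j ≤ out (j+1) := by
          intro j hj
          rcases lt_or_ge j 0 with hneg | hpos
          · rw [h0 j hneg.le, h0 (j+1) (by omega)]
          · have hj' : j.toNat < n := by omega
            have := IH j.toNat hj'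
            rwa [Int.toNat_of_nonneg hpos] at this
        have hsum : (∑ i ∈ Finset.Icc (1:ℤ) α,
              max (out (i - 1) + out (α - i - 1)) (out (α - i) + out (i - 2)))
            ≤ ∑ i ∈ Finset.Icc (1:ℤ) α,
              max (out (i - 1) + out (α + 1 - i - 1)) (out (α + 1 - i) + out (i - 2)) := by
          apply Finset.sum_le_sum
          intro i hi
          rw [Finset.mem_Icc] at hi
          have e1 : α + 1 - i - 1 = (α - i - 1) + 1 := by ring
          have e2 : α + 1 - i = (α - i) + 1 := by ring
          rw [e1, e2]
          exact max_le_max (add_le_add (le_refl _) (stepZ (α - i - 1) (by omega)))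
            (add_le_add (stepZ (α - i) (by omega)) (le_refl _))
        have hins : Finset.Icc (1:ℤ) (α+1) = insert (α+1) (Finset.Icc 1 α) := by
          ext x; simp only [Finset.mem_Icc, Finset.mem_insert]; omega
        have htop : max (out ((α+1) - 1) + out (α + 1 - (α+1) - 1))
            (out (α + 1 - (α+1)) + out ((α+1) - 2)) = out α := by
          rw [show (α+1) - 1 = α from by ring, show α + 1 - (α+1) - 1 = -1 from by ring,
            show α + 1 - (α+1) = 0 from by ring, show (α+1) - 2 = α - 1 from by ring,
            h0 (-1) (by norm_num), h0 0 le_rfl, add_zero, zero_add]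
          have := stepZ (α - 1) (by omega)
          rw [show α - 1 + 1 = α from by ring] at this
          exact max_eq_left this
        have hrecα := hrec α hα
        have hrecα1 := hrec (α+1) (by omega)
        rw [hins, Finset.sum_insert (by intro h; rw [Finset.mem_Icc] at h; omega),
          htop] at hrecα1
        have hA : (3:ℝ) ≤ (α:ℝ) := by exact_mod_cast hα
        have hA0 : (0:ℝ) < (α:ℝ) := by linarith
        have hA1 : (0:ℝ) < (α:ℝ) + 1 := by linarith
        set S : ℝ := ∑ i ∈ Finset.Icc (1:ℤ) α,
              max (out (i - 1) + out (α - i - 1)) (out (α - i) + out (i - 2)) with hS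
        set S' : ℝ := ∑ i ∈ Finset.Icc (1:ℤ) α,
              max (out (i - 1) + out (α + 1 - i - 1)) (out (α + 1 - i) + out (i - 2)) with hS'
        push_cast at hrecα1
        rw [hrecα1, hrecα]
        have hx : (α:ℝ) * (1/(α:ℝ) * S) = S := by field_simp
        have hy : ((α:ℝ)+1) * (1/((α:ℝ)+1) * ((1 + 1/(α:ℝ)*S) + S')) =
            (1 + 1/(α:ℝ)*S) + S' := by field_simp
        nlinarith [hsum, hx, hy, hA0, hA1]
  have stepAll : ∀ j : ℤ, out j ≤ out (j+1) := by
    intro j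
    rcases lt_or_ge j 0 with hneg | hpos
    · rw [h0 j hneg.le, h0 (j+1) (by omega)]
    · have := hstep j.toNat
      rwa [Int.toNat_of_nonneg hpos] at this
  -- upper bound, strong induction on ℕ
  have ubN : ∀ n : ℕ, out (n:ℤ) ≤ (n:ℝ) := by
    intro n
    induction n using Nat.strong_induction_on with
    | _ n IH =>
      rcases Nat.lt_or_ge n 3 with hn | hn
      · interval_cases n
        · norm_num [h0 0 le_rfl]
        · norm_num [h1]
        · norm_num [h2]
      · set α : ℤ := (n:ℤ) with hαdef
        have hα : (3:ℤ) ≤ α := by omega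
        have ubZ : ∀ j : ℤ, j < α → out j ≤ max (j:ℝ) 0 := by
          intro j hj
          rcases lt_or_ge j 0 with hneg | hpos
          · rw [h0 j hneg.le]; exact le_max_right _ _
          · have hj' : j.toNat < n := by omega
            have := IH j.toNat hj'
            rw [Int.toNat_of_nonneg hpos] at this
            refine le_trans ?_ (le_max_left _ _)
            rwa [← Int.cast_natCast, Int.toNat_of_nonneg hpos] at this
        have hA : (3:ℝ) ≤ (α:ℝ) := by exact_mod_cast hα
        have hA0 : (0:ℝ) < (α:ℝ) := by linarith
        have term_bound : ∀ i ∈ Finset.Icc (1:ℤ) α,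
            max (out (i - 1) + out (α - i - 1)) (out (α - i) + out (i - 2))
              ≤ (α:ℝ) - 1 := by
          intro i hi
          rw [Finset.mem_Icc] at hi
          have hi1 : (1:ℝ) ≤ (i:ℝ) := by exact_mod_cast hi.1
          have hi2 : (i:ℝ) ≤ (α:ℝ) := by exact_mod_cast hi.2
          have b1 := ubZ (i-1) (by omega)
          have b2 := ubZ (α-i-1) (by omega)
          have b3 := ubZ (α-i) (by omega)
          have b4 := ubZ (i-2) (by omega)
          push_cast at b1 b2 b3 b4
          apply max_le
          · rcases le_total ((α:ℝ) - (i:ℝ) - 1) 0 with h | h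
            · rw [max_eq_right h] at b2
              have : max ((i:ℝ) - 1) 0 ≤ (α:ℝ) - 1 := by
                apply max_le <;> linarith
              linarith
            · rw [max_eq_left h] at b2
              have : max ((i:ℝ) - 1) 0 = (i:ℝ) - 1 := max_eq_left (by linarith)
              rw [this] at b1
              linarith
          · rcases le_total ((i:ℝ) - 2) 0 with h | h
            · rw [max_eq_right h] at b4
              have : max ((α:ℝ) - (i:ℝ)) 0 ≤ (α:ℝ) - 1 := by
                apply max_le <;> linarith
              linarith
            · rw [max_eq_left h] at b4
              have : max ((α:ℝ) - (i:ℝ)) 0 = (α:ℝ) - (i:ℝ) := max_eq_left (by linarith)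
              rw [this] at b3
              linarith
        have card_eq : ((Finset.Icc (1:ℤ) α).card : ℝ) = (α:ℝ) := by
          rw [Int.card_Icc, show α + 1 - 1 = α from by ring,
            ← Int.cast_natCast, Int.toNat_of_nonneg (by omega)]
        have hsum : (∑ i ∈ Finset.Icc (1:ℤ) α,
            max (out (i - 1) + out (α - i - 1)) (out (α - i) + out (i - 2)))
              ≤ (α:ℝ) * ((α:ℝ) - 1) := by
          calc (∑ i ∈ Finset.Icc (1:ℤ) α,
              max (out (i - 1) + out (α - i - 1)) (out (α - i) + out (i - 2)))
              ≤ ∑ _i ∈ Finset.Icc (1:ℤ) α, ((α:ℝ) - 1) :=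
                Finset.sum_le_sum term_bound
            _ = ((Finset.Icc (1:ℤ) α).card : ℝ) * ((α:ℝ) - 1) := by
                rw [Finset.sum_const, nsmul_eq_mul]
            _ = (α:ℝ) * ((α:ℝ) - 1) := by rw [card_eq]
        rw [show ((n:ℕ):ℝ) = ((α:ℤ):ℝ) from (Int.cast_natCast n).symm, hrec α hα]
        have hx : (α:ℝ) * (1/(α:ℝ) *
            (∑ i ∈ Finset.Icc (1:ℤ) α,
              max (out (i - 1) + out (α - i - 1)) (out (α - i) + out (i - 2)))) =
            ∑ i ∈ Finset.Icc (1:ℤ) α,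
              max (out (i - 1) + out (α - i - 1)) (out (α - i) + out (i - 2)) := by
          field_simp
        nlinarith [hsum, hx, hA0]
  refine ⟨monotone_int_of_le_succ stepAll, ?_⟩
  intro α hα
  have := ubN α.toNat
  rwa [Int.toNat_of_nonneg hα, ← Int.cast_natCast, Int.toNat_of_nonneg hα] at this
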